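/- Let F and F_i be n×n symmetric positive definite real matrices. Then the block matrix [[F, I],[I, F_i]] is positive semidefinite and trace(F·F_i) = n if and only if the block matrix is positive semidefinite and F·F_i = I. -/

import Mathlib

open Matrix
open scoped MatrixOrder

lemma psd_trace_zero {n : ℕ} (M : Matrix (Fin n) (Fin n) ℝ)
    (hM : M.PosSemidef) (h : M.trace = 0) : M = 0 := by
  set S := CFC.sqrt M with hSdef
  have hSsym : Sᵀ = S := (CFC.sqrt_nonneg M).posSemidef.1
  have hSS : S * S = M := CFC.sqrt_mul_sqrt_self M hM.nonneg
  have htr : M.trace = ∑ i, ∑ j, (S i j) ^ 2 := by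
    rw [← hSS, Matrix.trace]
    simp only [Matrix.diag, Matrix.mul_apply]
    refine Finset.sum_congr rfl fun i _ => Finset.sum_congr rfl fun j _ => ?_
    have : S j i = S i j := by
      have h2 := congrFun (congrFun hSsym i) j
      simpa [Matrix.transpose_apply] using h2
    rw [this, sq]
  have hz : ∀ i ∈ Finset.univ, ∀ j ∈ Finset.univ, (S i j) ^ 2 = 0 := by
    have h0 : ∑ i, ∑ j, (S i j) ^ 2 = 0 := by rw [← htr, h]
    have := (Finset.sum_eq_zero_iff_of_nonneg (fun i _ =>
      Finset.sum_nonneg fun j _ => sq_nonneg _)).mp h0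
    intro i hi j hj
    exact (Finset.sum_eq_zero_iff_of_nonneg (fun j _ => sq_nonneg _)).mp (this i hi) j hj
  have hS0 : S = 0 := by
    ext i j
    exact pow_eq_zero_iff (n := 2) (by norm_num) |>.mp (hz i (Finset.mem_univ i) j (Finset.mem_univ j))
  rw [← hSS, hS0, Matrix.zero_mul]

theorem stmt1 (n : ℕ) (F Fi : Matrix (Fin n) (Fin n) ℝ)
    (hF : F.PosDef) (hFi : Fi.PosDef) :
    ((Matrix.fromBlocks F 1 1 Fi).PosSemidef ∧ (F * Fi).trace = (n : ℝ)) ↔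
      ((Matrix.fromBlocks F 1 1 Fi).PosSemidef ∧ F * Fi = 1) := by
  haveI : Invertible F := hF.isUnit.invertible
  constructor
  · rintro ⟨hB, htr⟩
    refine ⟨hB, ?_⟩
    have hB' : (Matrix.fromBlocks F 1 (1 : Matrix (Fin n) (Fin n) ℝ)ᴴ Fi).PosSemidef := by
      simpa using hB
    have hM : (Fi - F⁻¹).PosSemidef := by
      have := (Matrix.PosDef.fromBlocks₁₁ 1 Fi hF).mp hB'
      simpa using this
    set S := CFC.sqrt F with hSdef
    have hSS : S * S = F := CFC.sqrt_mul_sqrt_self F hF.posSemidef.nonneg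
    have hSunit : IsUnit S := by
      have hdet : S.det * S.det = F.det := by rw [← Matrix.det_mul, hSS]
      have : S.det ≠ 0 := by
        intro h0
        rw [h0, zero_mul] at hdet
        exact hF.det_pos.ne' hdet.symm
      exact Matrix.isUnit_iff_isUnit_det S |>.mpr (isUnit_iff_ne_zero.mpr this)
    haveI : Invertible S := hSunit.invertible
    have hN : (S * (Fi - F⁻¹) * Sᴴ).PosSemidef := hM.mul_mul_conjTranspose_same S
    have hSH : Sᴴ = S := (CFC.sqrt_nonneg F).posSemidef.1
    have htrN : (S * (Fi - F⁻¹) * Sᴴ).trace = 0 := by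
      rw [hSH, Matrix.trace_mul_comm, ← Matrix.mul_assoc, hSS]
      rw [Matrix.mul_sub, Matrix.trace_sub, htr,
        Matrix.mul_nonsing_inv F (Matrix.isUnit_iff_isUnit_det F |>.mp hF.isUnit),
        Matrix.trace_one]
      simp
    have hN0 : S * (Fi - F⁻¹) * Sᴴ = 0 := psd_trace_zero _ hN htrN
    have hM0 : Fi - F⁻¹ = 0 := by
      rw [hSH] at hN0
      have := congrArg (fun X => S⁻¹ * X * S⁻¹) hN0
      simpa [Matrix.mul_assoc, Matrix.nonsing_inv_mul S (Matrix.isUnit_iff_isUnit_det S |>.mp hSunit),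
        ← Matrix.mul_assoc, Matrix.mul_nonsing_inv S (Matrix.isUnit_iff_isUnit_det S |>.mp hSunit)]
        using this
    have : Fi = F⁻¹ := sub_eq_zero.mp hM0
    rw [this, Matrix.mul_nonsing_inv F (Matrix.isUnit_iff_isUnit_det F |>.mp hF.isUnit)]
  · rintro ⟨hB, hFFi⟩
    exact ⟨hB, by rw [hFFi, Matrix.trace_one]; simp⟩
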